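/- Every continuous linear form on K((t)) arises from the multiplication pairing: if w : K((t)) → K is K-linear and continuous for the higher topology, then setting x_i = w(t^{−i}) for i ∈ Z, the family (x_i) satisfies x_i = 0 for all sufficiently large i (so x = Σ_i x_i t^i ∈ K((t))), and w(y) = π_0(xy) for all y ∈ K((t)). -/

import Mathlib

open Filter

variable {K : Type*}

noncomputable def wB (q : ℝ) : WithBot ℤ → ℝ :=
  WithBot.recBotCoe 0 fun k : ℤ => q ^ k

noncomputable def wT (q : ℝ) : WithTop ℤ → ℝ :=
  WithTop.recTopCoe 0 fun k : ℤ => q ^ (-k)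

/-- `a ∈ 𝔭^m` for `m ∈ ℤ ∪ {-∞}`, with `𝔭^{-∞} = K`. -/
def memB [NormedField K] (q : ℝ) (a : K) : WithBot ℤ → Prop :=
  WithBot.recBotCoe True fun k : ℤ => ‖a‖ ≤ q ^ (-k)

/-- `a ∈ 𝔭^m` for `m ∈ ℤ ∪ {∞}`, with `𝔭^{∞} = 0`. -/
def memT [NormedField K] (q : ℝ) (a : K) : WithTop ℤ → Prop :=
  WithTop.recTopCoe (a = 0) fun k : ℤ => ‖a‖ ≤ q ^ (-k)

/-- The set `Λ = Σ_i 𝔭^{n_i} t^i` in `K((t))`. -/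
def latticeSet [NormedField K] (q : ℝ) (n : ℤ → WithBot ℤ) : Set (LaurentSeries K) :=
  {x | ∀ i : ℤ, memB q (x.coeff i) (n i)}

/-- The set `B = Σ_i 𝔭^{k_i} t^i` in `K((t))`. -/
def bddSet [NormedField K] (q : ℝ) (k : ℤ → WithTop ℤ) : Set (LaurentSeries K) :=
  {x | ∀ i : ℤ, memT q (x.coeff i) (k i)}

/-- The admissible seminorm `‖Σ x_i t^i‖ = sup_i |x_i| q^{n_i}` (with `q^{-∞} = 0`). -/
noncomputable def sn [NormedField K] (q : ℝ) (n : ℤ → WithBot ℤ) (x : LaurentSeries K) : ℝ :=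
  ⨆ i : ℤ, ‖x.coeff i‖ * wB q (n i)

/-- Admissibility of the net `(n_i)`: `n_i = -∞` for all sufficiently large `i`. -/
def AdmNet (n : ℤ → WithBot ℤ) : Prop := ∃ i₀ : ℤ, ∀ i ≥ i₀, n i = ⊥

/-- every continuous linear form `w` on `K((t))` (continuity for the
locally convex higher topology being equivalent to a bound by an admissible seminorm,
the family of admissible seminorms being directed) arises from the multiplication
pairing: the coefficients `x_i = w(t^{-i})` vanish for all `i` beyond a bound (so that
`x = Σ_i x_i t^i` defines an element of `K((t))`), and `w(y) = π₀(xy)` for all `y`. -/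
theorem continuous_linear_form_is_pairing [NontriviallyNormedField K]
    (hna : IsNonarchimedean fun a : K => ‖a‖) (q : ℝ) (hq : 1 < q)
    (w : LaurentSeries K →ₗ[K] K)
    (hw : ∃ n : ℤ → WithBot ℤ, AdmNet n ∧ ∃ C : ℝ, 0 < C ∧
      ∀ y : LaurentSeries K, ‖w y‖ ≤ C * sn q n y) :
    (∃ i₀ : ℤ, ∀ i ≤ i₀, w (HahnSeries.single (-i) (1 : K)) = 0) ∧
    ∃ x : LaurentSeries K, (∀ i : ℤ, x.coeff i = w (HahnSeries.single (-i) (1 : K))) ∧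
      ∀ y : LaurentSeries K, w y = (x * y).coeff 0 := by
  obtain ⟨n, ⟨N, hN⟩, C, hC, hbound⟩ := hw
  have hq0 : (0:ℝ) < q := lt_trans one_pos hq
  have hwB : ∀ m, 0 ≤ wB q m := by
    intro m
    induction m using WithBot.recBotCoe with
    | bot => simp [wB]
    | coe k => exact le_of_lt (zpow_pos hq0 k)
  -- bound for single terms
  have hsn : ∀ (a : ℤ) (c : K), sn q n (HahnSeries.single a c) ≤ ‖c‖ * wB q (n a) := by
    intro a c
    apply ciSup_le
    intro i
    by_cases h : i = a
    · subst h; simp [HahnSeries.coeff_single_same]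
    · simp [HahnSeries.coeff_single_of_ne h, mul_nonneg (norm_nonneg c) (hwB (n a))]
  have hzero : ∀ (a : ℤ) (c : K), n a = ⊥ → w (HahnSeries.single a c) = 0 := by
    intro a c h
    have h1 : ‖w (HahnSeries.single a c)‖ ≤ C * (‖c‖ * wB q (n a)) :=
      (hbound _).trans (mul_le_mul_of_nonneg_left (hsn a c) hC.le)
    rw [h] at h1
    simp only [wB, WithBot.recBotCoe_bot, mul_zero] at h1
    exact norm_le_zero_iff.mp h1
  have hx0 : ∀ i : ℤ, i ≤ -N → w (HahnSeries.single (-i) (1:K)) = 0 := by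
    intro i hi
    exact hzero _ _ (hN (-i) (by omega))
  refine ⟨⟨-N, hx0⟩, ?_⟩
  -- the Laurent series x
  have hpwo : (Function.support fun i : ℤ => w (HahnSeries.single (-i) (1:K))).IsPWO := by
    rw [Set.isPWO_iff_isWF]
    apply BddBelow.wellFoundedOn_lt
    refine ⟨-N, fun i hi => ?_⟩
    by_contra hlt
    exact hi (hx0 i (le_of_lt (not_le.mp hlt)))
  set x : LaurentSeries K := ⟨fun i : ℤ => w (HahnSeries.single (-i) (1:K)), hpwo⟩ with hxdef
  have hxcoeff : ∀ i : ℤ, x.coeff i = w (HahnSeries.single (-i) (1:K)) := fun i => rfl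
  refine ⟨x, hxcoeff, ?_⟩
  intro y
  set m := y.order with hm
  set S : Finset ℤ := Finset.Icc m (N - 1) with hS
  set tr : LaurentSeries K := ∑ j ∈ S, HahnSeries.single j (y.coeff j) with htr
  have htrc : ∀ k : ℤ, tr.coeff k = if k ∈ S then y.coeff k else 0 := by
    intro k
    rw [htr, ← HahnSeries.coeff.addMonoidHom_apply, map_sum]
    simp only [HahnSeries.coeff.addMonoidHom_apply, HahnSeries.coeff_single]
    refine (Finset.sum_congr rfl fun j _ => ?_).trans (Finset.sum_ite_eq S k fun j => y.coeff j)
    by_cases h : k = j <;> simp [h]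
  set z : LaurentSeries K := y - tr with hz
  have hzc : ∀ k : ℤ, k < N → z.coeff k = 0 := by
    intro k hk
    rw [hz, HahnSeries.coeff_sub, htrc]
    by_cases hkS : k ∈ S
    · simp [hkS]
    · have hkm : k < m := by
        rw [hS] at hkS
        simp only [Finset.mem_Icc, not_and, not_le] at hkS
        by_contra hge
        exact absurd (hkS (not_lt.mp hge)) (not_lt.mpr (by omega))
      simp [hkS, HahnSeries.coeff_eq_zero_of_lt_order hkm]
  have hwz : w z = 0 := by
    have hsnz : sn q n z = 0 := by
      have : ∀ i : ℤ, ‖z.coeff i‖ * wB q (n i) = 0 := by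
        intro i
        by_cases hi : i < N
        · simp [hzc i hi]
        · simp [hN i (not_lt.mp hi), wB]
      simp only [sn]
      rw [show (fun i : ℤ => ‖z.coeff i‖ * wB q (n i)) = fun _ => (0:ℝ) from funext this]
      exact ciSup_const
    have h1 := hbound z
    rw [hsnz, mul_zero] at h1
    exact norm_le_zero_iff.mp h1
  have hy : y = tr + z := by rw [hz]; ring
  -- w of truncation
  have hwsingle : ∀ (j : ℤ) (c : K), w (HahnSeries.single j c) = c * w (HahnSeries.single j 1) := by
    intro j c
    have : HahnSeries.single j c = c • HahnSeries.single j (1:K) := by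
      ext k
      rw [HahnSeries.coeff_smul]
      by_cases h : k = j
      · subst h; simp [HahnSeries.coeff_single_same]
      · simp [HahnSeries.coeff_single_of_ne h]
    rw [this, map_smul, smul_eq_mul]
  have hwtr : w tr = ∑ j ∈ S, y.coeff j * w (HahnSeries.single j 1) := by
    rw [htr, map_sum]
    exact Finset.sum_congr rfl fun j _ => hwsingle j (y.coeff j)
  -- (x * tr).coeff 0
  have hxtr : (x * tr).coeff 0 = ∑ j ∈ S, x.coeff (-j) * y.coeff j := by
    rw [htr, Finset.mul_sum, ← HahnSeries.coeff.addMonoidHom_apply, map_sum]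
    refine Finset.sum_congr rfl fun j _ => ?_
    simp only [HahnSeries.coeff.addMonoidHom_apply]
    have := HahnSeries.coeff_mul_single_add (r := y.coeff j) (x := x) (a := -j) (b := j)
    rwa [neg_add_cancel] at this
  -- (x * z).coeff 0 = 0
  have hxz : (x * z).coeff 0 = 0 := by
    rw [HahnSeries.coeff_mul]
    apply Finset.sum_eq_zero
    intro ij hij
    rw [Finset.mem_addAntidiagonal] at hij
    obtain ⟨h1, h2, h3⟩ := hij
    by_cases hle : ij.1 ≤ -N
    · exact absurd (hx0 ij.1 hle) h1
    · have : ij.2 < N := by omega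
      exact absurd (hzc ij.2 this) h2
  rw [hy, map_add, hwz, add_zero, hwtr, left_distrib, HahnSeries.coeff_add, hxz, add_zero, hxtr]
  refine Finset.sum_congr rfl fun j _ => ?_
  rw [hxcoeff (-j), neg_neg, mul_comm]
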